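/- Let $(\mu_t)$ be a sequence in $\mathbb{R}^d$ with $\|\mu_t - \mu_{t'}\|_2 \ge (t'-t)\alpha$ for all $t < t'$, where $\alpha > 0$. Let $x_t \sim \mathcal{N}(\mu_t, \sigma^2 I)$ independently for each $t$, and let $\tau > 2\sigma\sqrt{d(1+\epsilon)}/\alpha$ be a positive integer for some $\epsilon \in (0,1)$. Then for every $t$, with probability at least $1 - 2\exp(-d\epsilon^2/8)$, both $\|x_t - \mu_t\|_2 \le \sigma\sqrt{d(1+\epsilon)}$ and $\|x_{t+\tau} - \mu_t\|_2 > \sigma\sqrt{d(1+\epsilon)}$ hold. -/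

import Mathlib

open MeasureTheory ProbabilityTheory Real
open scoped NNReal ENNReal

lemma my_lintegral_pi {n : ℕ} {E : Fin n → Type*} [∀ i, MeasurableSpace (E i)]
    (μm : ∀ i, Measure (E i)) [∀ i, SigmaFinite (μm i)]
    (f : ∀ i, E i → ℝ≥0∞) (hf : ∀ i, Measurable (f i)) :
    ∫⁻ x, ∏ i, f i (x i) ∂Measure.pi μm = ∏ i, ∫⁻ x, f i x ∂μm i := by
  induction n with
  | zero => simp [Measure.pi_of_empty]
  | succ n ih =>
    have h := (measurePreserving_piFinSuccAbove μm 0)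
    set g : (∀ j : Fin n, E ((0 : Fin (n+1)).succAbove j)) → ℝ≥0∞ :=
      fun w => ∏ j, f ((0 : Fin (n+1)).succAbove j) (w j) with hg
    have hgm : Measurable g :=
      Finset.measurable_prod _ fun j _ => (hf _).comp (measurable_pi_apply j)
    have hG : Measurable fun p : E 0 × (∀ j : Fin n, E ((0 : Fin (n+1)).succAbove j)) =>
        f 0 p.1 * g p.2 := ((hf 0).comp measurable_fst).mul (hgm.comp measurable_snd)
    calc ∫⁻ x, ∏ i, f i (x i) ∂Measure.pi μm
        = ∫⁻ p, f 0 p.1 * g p.2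
            ∂((μm 0).prod (Measure.pi fun j => μm ((0 : Fin (n+1)).succAbove j))) := by
          rw [← h.lintegral_comp hG]
          refine lintegral_congr fun x => ?_
          rw [Fin.prod_univ_succ]
          simp [MeasurableEquiv.piFinSuccAbove, hg, Fin.zero_succAbove, Fin.tail]
          rfl
      _ = (∫⁻ y, f 0 y ∂μm 0) * ∫⁻ w, g w ∂(Measure.pi fun j => μm ((0 : Fin (n+1)).succAbove j)) :=
          lintegral_prod_mul ((hf 0).aemeasurable) hgm.aemeasurable
      _ = ∏ i, ∫⁻ x, f i x ∂μm i := by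
          rw [hg, ih _ _ fun j => hf _, Fin.prod_univ_succ]
          simp [Fin.zero_succAbove]
          rfl

lemma gauss_sq_mgf (c : ℝ) (σ : ℝ≥0) (hσ : 0 < σ) (ε : ℝ) (hε : ε ∈ Set.Ioo (0:ℝ) 1) :
    ∫⁻ y, ENNReal.ofReal (rexp (ε / (2 * (σ:ℝ)^2 * (1+ε)) * (y - c)^2)) ∂gaussianReal c (σ^2)
      = ENNReal.ofReal (Real.sqrt (1+ε)) := by
  obtain ⟨hε0, hε1⟩ := hε
  have hv : (0:ℝ) < (σ:ℝ)^2 := by positivity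
  set v : ℝ := (σ:ℝ)^2 with hvdef
  set l : ℝ := ε / (2 * v * (1+ε)) with hl
  have hl0 : 0 < l := by positivity
  set b : ℝ := 1/(2*v*(1+ε)) with hb
  have hb0 : 0 < b := by positivity
  have hσ2 : (σ^2 : ℝ≥0) ≠ 0 := by positivity
  have hcoe : ((σ^2 : ℝ≥0) : ℝ) = v := by push_cast; rfl
  rw [gaussianReal_of_var_ne_zero _ hσ2]
  have hfm : Measurable fun y : ℝ => ENNReal.ofReal (rexp (l * (y - c)^2)) := by
    apply ENNReal.measurable_ofReal.comp
    exact (measurable_exp.comp (((measurable_id.sub_const c).pow_const 2).const_mul l))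
  rw [lintegral_withDensity_eq_lintegral_mul _ (measurable_gaussianPDF c (σ^2)) hfm]
  have hexp : ∀ u : ℝ, -u/(2*v) + l*u = -b*u := by
    intro u
    rw [hl, hb]
    field_simp
    ring
  have hpdf : ∀ y, (gaussianPDF c (σ^2) * fun y => ENNReal.ofReal (rexp (l * (y - c)^2))) y
      = ENNReal.ofReal ((√(2 * π * v))⁻¹ * rexp (-b * (y - c)^2)) := by
    intro y
    simp only [Pi.mul_apply, gaussianPDF, ← ENNReal.ofReal_mul (gaussianPDFReal_nonneg c _ y)]
    congr 1
    rw [gaussianPDFReal, hcoe, mul_assoc, ← Real.exp_add, hexp ((y - c)^2)]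
  simp_rw [hpdf]
  have hInt : Integrable (fun y => (√(2 * π * v))⁻¹ * rexp (-b * (y - c)^2)) := by
    apply Integrable.const_mul
    exact (integrable_exp_neg_mul_sq hb0).comp_sub_right c
  rw [← ofReal_integral_eq_lintegral_ofReal hInt
    (Filter.Eventually.of_forall fun y => by positivity)]
  rw [integral_const_mul]
  have h1 : (∫ y : ℝ, rexp (-b * (y - c)^2)) = √(π / b) := by
    rw [integral_sub_right_eq_self (fun y => rexp (-b * y^2)) c, integral_gaussian]
  rw [h1]
  congr 1
  have hpb : π / b = (2 * π * v) * (1 + ε) := by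
    rw [hb]; field_simp
  rw [hpb, Real.sqrt_mul (x := 2 * π * v) (by positivity) (1 + ε),
    inv_mul_cancel_left₀ (by positivity)]

lemma sqrt_one_add_le {ε : ℝ} (hε : ε ∈ Set.Ioo (0:ℝ) 1) :
    Real.sqrt (1 + ε) ≤ rexp (ε/2 - ε^2/8) := by
  obtain ⟨hε0, hε1⟩ := hε
  set t : ℝ := ε - ε^2/4 with ht
  have ht0 : 0 ≤ t := by rw [ht]; nlinarith
  have hsum := Real.sum_le_exp_of_nonneg ht0 3
  have h2 : 1 + ε ≤ rexp t := by
    have : (1:ℝ) + t + t^2/2 ≤ rexp t := by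
      convert hsum using 1
      rw [Finset.sum_range_succ, Finset.sum_range_succ, Finset.sum_range_succ]
      norm_num
    nlinarith
  have h3 : Real.sqrt (1 + ε) ≤ Real.sqrt (rexp t) := Real.sqrt_le_sqrt h2
  have h4 : Real.sqrt (rexp t) = rexp (t/2) := by
    rw [show rexp t = rexp (t/2)^2 by rw [sq, ← Real.exp_add]; ring_nf]
    exact Real.sqrt_sq (Real.exp_pos _).le
  rw [h4] at h3
  convert h3 using 2
  ring

lemma chi_upper (d : ℕ) (m : Fin d → ℝ) (σ : ℝ≥0) (hσ : 0 < σ) (ε : ℝ)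
    (hε : ε ∈ Set.Ioo (0:ℝ) 1) :
    (Measure.pi fun i : Fin d => gaussianReal (m i) (σ ^ 2))
      {y | (d : ℝ) * (σ:ℝ)^2 * (1+ε) ≤ ∑ i, (y i - m i)^2}
      ≤ ENNReal.ofReal (rexp (-(d:ℝ) * ε^2 / 8)) := by
  obtain ⟨hε0, hε1⟩ := hε
  have hv : (0:ℝ) < (σ:ℝ)^2 := by positivity
  set v : ℝ := (σ:ℝ)^2 with hvdef
  set l : ℝ := ε / (2 * v * (1+ε)) with hl
  have hl0 : 0 < l := by positivity
  set a : ℝ := (d : ℝ) * v * (1+ε) with ha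
  set μpi := Measure.pi fun i : Fin d => gaussianReal (m i) (σ ^ 2) with hμpi
  set S : (Fin d → ℝ) → ℝ := fun y => ∑ i, (y i - m i)^2 with hS
  have hSm : Measurable S :=
    Finset.measurable_sum _ fun i _ => by fun_prop
  set f : (Fin d → ℝ) → ℝ≥0∞ := fun y => ENNReal.ofReal (rexp (l * S y)) with hf
  have hfm : Measurable f :=
    ENNReal.measurable_ofReal.comp (measurable_exp.comp (hSm.const_mul l))
  -- compute the lintegral of f
  have hprod : ∫⁻ y, f y ∂μpi = ENNReal.ofReal (Real.sqrt (1+ε)) ^ d := by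
    have hfeq : ∀ y, f y = ∏ i, ENNReal.ofReal (rexp (l * (y i - m i)^2)) := by
      intro y
      rw [hf, hS]
      simp only [Finset.mul_sum, Real.exp_sum]
      rw [← ENNReal.ofReal_prod_of_nonneg]
      intro i _
      positivity
    simp_rw [hfeq]
    rw [my_lintegral_pi (fun i => gaussianReal (m i) (σ ^ 2))
      (fun i y => ENNReal.ofReal (rexp (l * (y - m i)^2)))
      (fun i => ENNReal.measurable_ofReal.comp
        (measurable_exp.comp (((measurable_id.sub_const (m i)).pow_const 2).const_mul l)))]
    have : ∀ i : Fin d, ∫⁻ y, ENNReal.ofReal (rexp (l * (y - m i)^2)) ∂gaussianReal (m i) (σ^2)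
        = ENNReal.ofReal (Real.sqrt (1+ε)) := fun i => gauss_sq_mgf (m i) σ hσ ε ⟨hε0, hε1⟩
    simp only [this, Finset.prod_const, Finset.card_univ, Fintype.card_fin]
  set c : ℝ≥0∞ := ENNReal.ofReal (rexp (l * a)) with hc
  have hc0 : c ≠ 0 := by
    simp [hc, ENNReal.ofReal_eq_zero, not_le, Real.exp_pos]
  have hctop : c ≠ ⊤ := ENNReal.ofReal_ne_top
  have hmono : {y | a ≤ S y} ⊆ {y | c ≤ f y} := by
    intro y hy
    exact ENNReal.ofReal_le_ofReal (Real.exp_le_exp.mpr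
      (mul_le_mul_of_nonneg_left hy hl0.le))
  have hmarkov := mul_meas_ge_le_lintegral₀ hfm.aemeasurable c (μ := μpi)
  have hla : l * a = (d : ℝ) * ε / 2 := by
    rw [hl, ha]; field_simp
  have hreal : Real.sqrt (1+ε) ^ d ≤ rexp (-(d:ℝ) * ε^2 / 8) * rexp (l * a) := by
    rw [← Real.exp_add, hla]
    have hb := sqrt_one_add_le ⟨hε0, hε1⟩
    calc Real.sqrt (1+ε) ^ d ≤ rexp (ε/2 - ε^2/8) ^ d :=
          pow_le_pow_left₀ (Real.sqrt_nonneg _) hb d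
      _ = rexp (-(d:ℝ) * ε^2 / 8 + (d:ℝ) * ε / 2) := by
          rw [← Real.exp_nat_mul]; congr 1; ring
  have hle : ∫⁻ y, f y ∂μpi ≤ ENNReal.ofReal (rexp (-(d:ℝ) * ε^2 / 8)) * c := by
    rw [hprod, hc, ← ENNReal.ofReal_mul (Real.exp_pos _).le,
      ← ENNReal.ofReal_pow (Real.sqrt_nonneg _)]
    exact ENNReal.ofReal_le_ofReal hreal
  calc μpi {y | a ≤ S y} ≤ μpi {y | c ≤ f y} := measure_mono hmono
    _ ≤ ENNReal.ofReal (rexp (-(d:ℝ) * ε^2 / 8)) := by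
        rw [← ENNReal.mul_le_mul_iff_right hc0 hctop]
        calc c * μpi {y | c ≤ f y} ≤ ∫⁻ y, f y ∂μpi := hmarkov
          _ ≤ ENNReal.ofReal (rexp (-(d:ℝ) * ε^2 / 8)) * c := hle
          _ = c * ENNReal.ofReal (rexp (-(d:ℝ) * ε^2 / 8)) := mul_comm _ _

theorem stmt_8 {Ω : Type*} [MeasurableSpace Ω] (P : Measure Ω) [IsProbabilityMeasure P]
    (d : ℕ) (μ : ℕ → Fin d → ℝ) (α : ℝ) (hα : 0 < α)
    (hdrift : ∀ t t' : ℕ, t < t' →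
      ((t' : ℝ) - t) * α ≤ Real.sqrt (∑ i, (μ t i - μ t' i) ^ 2))
    (σ : ℝ≥0) (hσ : 0 < σ) (ε : ℝ) (hε : ε ∈ Set.Ioo (0 : ℝ) 1)
    (x : ℕ → Ω → (Fin d → ℝ)) (hmeas : ∀ t, Measurable (x t))
    (hlaw : ∀ t, Measure.map (x t) P = Measure.pi fun i : Fin d => gaussianReal (μ t i) (σ ^ 2))
    (hindep : iIndepFun x P)
    (τ : ℕ) (hτ : (τ : ℝ) > 2 * σ * Real.sqrt (d * (1 + ε)) / α) (t : ℕ) :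
    1 - 2 * ENNReal.ofReal (Real.exp (-(d : ℝ) * ε ^ 2 / 8)) ≤
      P {ω | Real.sqrt (∑ i, (x t ω i - μ t i) ^ 2) ≤ σ * Real.sqrt (d * (1 + ε)) ∧
             Real.sqrt (∑ i, (x (t + τ) ω i - μ t i) ^ 2) > σ * Real.sqrt (d * (1 + ε))} := by
  obtain ⟨hε0, hε1⟩ := hε
  rcases Nat.eq_zero_or_pos d with hd | hd
  · subst hd
    have h0 : (1:ℝ≥0∞) - 2 * ENNReal.ofReal (Real.exp (-(0:ℕ) * ε ^ 2 / 8)) = 0 := by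
      norm_num
      exact tsub_eq_zero_of_le one_le_two
    rw [h0]
    exact zero_le
  have hdpos : (0:ℝ) < d := by exact_mod_cast hd
  have hv : (0:ℝ) < (σ:ℝ)^2 := by positivity
  set v : ℝ := (σ:ℝ)^2 with hvdef
  set a : ℝ := (d : ℝ) * v * (1+ε) with ha
  set R : ℝ := (σ:ℝ) * Real.sqrt (d * (1 + ε)) with hR
  have hR0 : 0 < R := by
    apply mul_pos (by exact_mod_cast hσ)
    apply Real.sqrt_pos.mpr; positivity
  have hRa : Real.sqrt a = R := by
    rw [show a = v * ((d:ℝ) * (1+ε)) by ring, Real.sqrt_mul hv.le, hvdef,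
      Real.sqrt_sq σ.coe_nonneg]
  have hτpos : 0 < τ := by
    by_contra h
    push_neg at h
    interval_cases τ
    simp only [Nat.cast_zero] at hτ
    have : 0 < 2 * (σ:ℝ) * Real.sqrt (d * (1 + ε)) / α := by positivity
    linarith
  have hτα : 2 * R < (τ:ℝ) * α := by
    have := (div_lt_iff₀ hα).mp hτ
    rw [hR]; linarith
  -- distance identity
  have hDist : ∀ u w : Fin d → ℝ,
      Real.sqrt (∑ i, (u i - w i)^2) = dist (WithLp.toLp 2 u) (WithLp.toLp 2 w) := by
    intro u w
    rw [EuclideanSpace.dist_eq]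
    congr 1
    exact Finset.sum_congr rfl fun i _ => by rw [Real.dist_eq, sq_abs, PiLp.toLp_apply, PiLp.toLp_apply]
  -- measurable sets
  have hA : ∀ s : ℕ, MeasurableSet {y : Fin d → ℝ | a ≤ ∑ i, (y i - μ s i)^2} := fun s =>
    measurableSet_le measurable_const
      (Finset.measurable_sum _ fun i _ => by fun_prop)
  set E1 : Set Ω := x t ⁻¹' {y | a ≤ ∑ i, (y i - μ t i)^2} with hE1
  set E2 : Set Ω := x (t+τ) ⁻¹' {y | a ≤ ∑ i, (y i - μ (t+τ) i)^2} with hE2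
  have hP : ∀ s : ℕ, P (x s ⁻¹' {y | a ≤ ∑ i, (y i - μ s i)^2})
      ≤ ENNReal.ofReal (Real.exp (-(d : ℝ) * ε ^ 2 / 8)) := by
    intro s
    rw [← Measure.map_apply (hmeas s) (hA s), hlaw s]
    exact chi_upper d (μ s) σ hσ ε ⟨hε0, hε1⟩
  have hEm : MeasurableSet (E1 ∪ E2) :=
    ((hA t).preimage (hmeas t)).union ((hA (t+τ)).preimage (hmeas (t+τ)))
  have hsub : (E1 ∪ E2)ᶜ ⊆ {ω | Real.sqrt (∑ i, (x t ω i - μ t i) ^ 2) ≤ R ∧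
      Real.sqrt (∑ i, (x (t + τ) ω i - μ t i) ^ 2) > R} := by
    intro ω hω
    simp only [Set.mem_compl_iff, Set.mem_union, hE1, hE2, Set.mem_preimage,
      Set.mem_setOf_eq, not_or, not_le] at hω
    obtain ⟨h1, h2⟩ := hω
    constructor
    · calc Real.sqrt (∑ i, (x t ω i - μ t i) ^ 2) ≤ Real.sqrt a := Real.sqrt_le_sqrt h1.le
        _ = R := hRa
    · have hb2 : Real.sqrt (∑ i, (x (t+τ) ω i - μ (t+τ) i) ^ 2) ≤ R := by
        calc Real.sqrt (∑ i, (x (t+τ) ω i - μ (t+τ) i) ^ 2) ≤ Real.sqrt a :=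
              Real.sqrt_le_sqrt h2.le
          _ = R := hRa
      have hdμ : (τ:ℝ) * α ≤ Real.sqrt (∑ i, (μ t i - μ (t+τ) i)^2) := by
        have := hdrift t (t+τ) (Nat.lt_add_of_pos_right hτpos)
        push_cast at this ⊢
        convert this using 2
        ring
      rw [hDist] at hdμ hb2 ⊢
      have htri := dist_triangle (α := EuclideanSpace ℝ (Fin d)) (WithLp.toLp 2 (μ t)) (WithLp.toLp 2 (x (t+τ) ω)) (WithLp.toLp 2 (μ (t+τ)))
      have hcomm : dist (WithLp.toLp 2 (μ t)) (WithLp.toLp 2 (x (t+τ) ω))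
          = dist (WithLp.toLp 2 (x (t+τ) ω)) (WithLp.toLp 2 (μ t)) := dist_comm _ _
      rw [hcomm] at htri
      linarith
  have hUB : P (E1 ∪ E2) ≤ 2 * ENNReal.ofReal (Real.exp (-(d : ℝ) * ε ^ 2 / 8)) := by
    calc P (E1 ∪ E2) ≤ P E1 + P E2 := measure_union_le _ _
      _ ≤ _ := by rw [two_mul]; exact add_le_add (hP t) (hP (t+τ))
  calc 1 - 2 * ENNReal.ofReal (Real.exp (-(d : ℝ) * ε ^ 2 / 8))
      ≤ 1 - P (E1 ∪ E2) := tsub_le_tsub_left hUB 1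
    _ = P ((E1 ∪ E2)ᶜ) := (prob_compl_eq_one_sub hEm).symm
    _ ≤ _ := measure_mono hsub
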